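/- Let n₁, n₂ ≥ 2 be coprime integers. There exists φ₀ > 0 such that for every irrational φ with 0 < φ < φ₀, the planar Lissajous curve L(t) = (cos(2π n₁ t), cos(2π n₂ (t + φ))), t ∈ [0,1), has exactly 2·n₁·n₂ − n₁ − n₂ double points; precisely, the set of unordered pairs {s, t} with s, t ∈ [0,1), s ≠ t and L(s) = L(t) is finite of cardinality 2·n₁·n₂ − n₁ − n₂. -/

import Mathlib

open Real

lemma cosEq (a b : ℝ) : Real.cos (2*π*a) = Real.cos (2*π*b) ↔
    (∃ k : ℤ, a - b = k) ∨ (∃ k : ℤ, a + b = k) := by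
  rw [Real.cos_eq_cos_iff]
  have hπ : (0:ℝ) < π := Real.pi_pos
  constructor
  · rintro ⟨k, h | h⟩
    · left
      refine ⟨-k, ?_⟩
      have h2 : (2*π) * (b - (k + a)) = 0 := by linear_combination h
      have h3 : b - (k + a) = 0 := by
        rcases mul_eq_zero.1 h2 with h' | h'
        · exact absurd h' (by positivity)
        · exact h'
      push_cast; linarith
    · right
      refine ⟨k, ?_⟩
      have h2 : (2*π) * (b - (k - a)) = 0 := by linear_combination h
      have h3 : b - (k - a) = 0 := by
        rcases mul_eq_zero.1 h2 with h' | h'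
        · exact absurd h' (by positivity)
        · exact h'
      linarith
  · rintro (⟨k, h⟩ | ⟨k, h⟩)
    · exact ⟨-k, Or.inl (by push_cast; linear_combination (-2*π) * h)⟩
    · exact ⟨k, Or.inr (by linear_combination (2*π) * h)⟩


/-- The parameter set for one family of double points. -/
def Aset (a b : ℕ) : Finset (ℕ × ℕ) :=
  (Finset.Ico 1 a ×ˢ Finset.Ico 1 (2*b)).filter
    (fun p => p.1 * b < p.2 * a ∧ p.2 * a + p.1 * b < 2*a*b)

lemma not_dvd_of_coprime {a b k : ℕ} (hcop : a.Coprime b) (hk1 : 1 ≤ k) (hk2 : k < a) :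
    ¬ a ∣ k * b := by
  intro hdvd
  have : a ∣ k := (Nat.Coprime.dvd_of_dvd_mul_right hcop) hdvd
  have := Nat.le_of_dvd (by omega) this
  omega

lemma mod_pos_of_coprime {a b k : ℕ} (hcop : a.Coprime b) (hk1 : 1 ≤ k) (hk2 : k < a) :
    1 ≤ k * b % a := by
  have h := not_dvd_of_coprime hcop hk1 hk2
  have := Nat.dvd_of_mod_eq_zero (n := a) (m := k*b)
  omega

lemma q_le {a b k : ℕ} (ha : 0 < a) (hk2 : k < a) (hb : 0 < b) : k * b / a ≤ b - 1 := by
  have : k * b / a < b := Nat.div_lt_of_lt_mul (by nlinarith)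
  omega

/-- The fiber over k is an interval. -/
lemma fiber_eq (a b k : ℕ) (ha : 0 < a) (hb : 0 < b) (hcop : a.Coprime b)
    (hk1 : 1 ≤ k) (hk2 : k < a) :
    ((Finset.Ico 1 (2*b)).filter (fun m => k * b < m * a ∧ m * a + k * b < 2*a*b)) =
      Finset.Ico (k*b/a + 1) (2*b - k*b/a) := by
  ext m
  simp only [Finset.mem_filter, Finset.mem_Ico]
  have hq := Nat.div_add_mod (k*b) a
  set q := k*b/a with hqdef
  set r := k*b % a with hrdef
  have hr1 : 1 ≤ r := mod_pos_of_coprime hcop hk1 hk2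
  have hr2 : r < a := Nat.mod_lt _ ha
  have hqb : q ≤ b - 1 := q_le ha hk2 hb
  constructor
  · rintro ⟨⟨hm1, hm2⟩, hma, hmab⟩
    constructor
    · -- k*b < m*a  ⇒ q < m
      by_contra h
      push_neg at h
      have : m * a ≤ q * a := Nat.mul_le_mul_right a (by omega)
      nlinarith
    · -- m*a + k*b < 2ab ⇒ m < 2b - q
      by_contra h
      push_neg at h
      have : (2*b - q) * a ≤ m * a := Nat.mul_le_mul_right a h
      have hsub : (2*b - q) * a = 2*b*a - q*a := Nat.sub_mul _ _ _
      have hqa : q * a ≤ 2*b*a := by nlinarith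
      nlinarith [Nat.sub_add_cancel hqa]
  · rintro ⟨hm1, hm2⟩
    have hma : k * b < m * a := by
      have : (q+1) * a ≤ m * a := Nat.mul_le_mul_right a hm1
      nlinarith
    have hmab : m * a + k * b < 2*a*b := by
      have h1 : (m+1) * a ≤ (2*b-q)*a := Nat.mul_le_mul_right a hm2
      have hsub : (2*b - q) * a = 2*b*a - q*a := Nat.sub_mul _ _ _
      have hqa : q*a ≤ 2*b*a := Nat.mul_le_mul_right a (by omega)
      have hcm : a*q = q*a := mul_comm a q
      have hab : 2*a*b = 2*b*a := by ring
      rw [add_mul, one_mul, hsub] at h1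
      have hsub' : 2*b*a - q*a + q*a = 2*b*a := Nat.sub_add_cancel hqa
      rw [hab]
      linarith
    have hb1 : 1 ≤ m := le_trans (Nat.le_add_left 1 q) hm1
    have hb2 : m < 2*b := lt_of_lt_of_le hm2 (Nat.sub_le _ _)
    exact ⟨⟨hb1, hb2⟩, hma, hmab⟩

lemma sum_q_aux (a b q₁ q₂ r₁ r₂ : ℕ) (h1 : 1 ≤ r₁) (h2 : r₁ < a) (h3 : 1 ≤ r₂) (h4 : r₂ < a)
    (hsum : a*q₁ + r₁ + (a*q₂ + r₂) = a*b) : q₁ + q₂ = b - 1 := by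
  have hma : a*(q₁+q₂) = a*q₁ + a*q₂ := by ring
  have hlt : a*(q₁+q₂) < a*b := by omega
  have hgt : a*b < a*(q₁+q₂) + 2*a := by omega
  have hb1 : q₁+q₂ < b := Nat.lt_of_mul_lt_mul_left hlt
  have he : a*(q₁+q₂+2) = a*(q₁+q₂)+2*a := by ring
  have hb2 : b < q₁+q₂+2 := Nat.lt_of_mul_lt_mul_left (a := a) (by omega)
  omega

lemma q_add (a b k : ℕ) (ha : 0 < a) (hb : 0 < b) (hcop : a.Coprime b)
    (hk1 : 1 ≤ k) (hk2 : k < a) : k*b/a + (a-k)*b/a = b - 1 := by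
  have hq1 := Nat.div_add_mod (k*b) a
  have hq2 := Nat.div_add_mod ((a-k)*b) a
  have hr1 : 1 ≤ k*b % a := mod_pos_of_coprime hcop hk1 hk2
  have hr1' : k*b % a < a := Nat.mod_lt _ ha
  have hr2 : 1 ≤ (a-k)*b % a := mod_pos_of_coprime hcop (by omega) (by omega)
  have hr2' : (a-k)*b % a < a := Nat.mod_lt _ ha
  have hkb : k*b + (a-k)*b = a*b := by
    rw [← Nat.add_mul]
    congr 1
    omega
  exact sum_q_aux a b _ _ _ _ hr1 hr1' hr2 hr2' (by omega)

lemma f_add (b q1 q2 : ℕ) (h : q1 + q2 = b-1) (h1 : q1 ≤ b-1) (h2 : q2 ≤ b-1) (hb : 1 ≤ b) :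
    ((2*b - q1) - (q1+1)) + ((2*b - q2) - (q2+1)) = 2*b := by omega

lemma card_Aset (a b : ℕ) (ha : 2 ≤ a) (hb : 1 ≤ b) (hcop : a.Coprime b) :
    (Aset a b).card = (a-1) * b := by
  classical
  have hA : Aset a b = (Finset.Ico 1 a).biUnion
      (fun k => (Finset.Ico (k*b/a + 1) (2*b - k*b/a)).image (fun m => (k, m))) := by
    ext ⟨k, m⟩
    simp only [Aset, Finset.mem_filter, Finset.mem_product, Finset.mem_biUnion,
      Finset.mem_image, Finset.mem_Ico]
    constructor
    · rintro ⟨⟨⟨hk1, hk2⟩, hm1, hm2⟩, hc1, hc2⟩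
      refine ⟨k, ⟨hk1, hk2⟩, m, ?_, rfl⟩
      have hfib := fiber_eq a b k (by omega) hb hcop hk1 hk2
      have : m ∈ (Finset.Ico 1 (2*b)).filter
          (fun m => k * b < m * a ∧ m * a + k * b < 2*a*b) := by
        simp only [Finset.mem_filter, Finset.mem_Ico]
        exact ⟨⟨hm1, hm2⟩, hc1, hc2⟩
      rw [hfib] at this
      simpa using this
    · rintro ⟨k', hk', m', hm', heq⟩
      obtain ⟨rfl, rfl⟩ : k' = k ∧ m' = m := Prod.ext_iff.1 heq
      have hfib := fiber_eq a b k' (by omega) hb hcop hk'.1 hk'.2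
      have : m' ∈ (Finset.Ico 1 (2*b)).filter
          (fun m => k' * b < m * a ∧ m * a + k' * b < 2*a*b) := by
        rw [hfib]; simpa using hm'
      simp only [Finset.mem_filter, Finset.mem_Ico] at this
      exact ⟨⟨hk', this.1⟩, this.2⟩
  rw [hA, Finset.card_biUnion]
  · have hcongr : ∀ k ∈ Finset.Ico 1 a,
        ((Finset.Ico (k*b/a + 1) (2*b - k*b/a)).image (fun m => (k, m))).card
          = (2*b - k*b/a) - (k*b/a + 1) := by
      intro k hk
      rw [Finset.card_image_of_injective _ (fun x y h => (Prod.mk.injEq _ _ _ _ ▸ h).2 ▸ rfl)]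
      · exact Nat.card_Ico _ _
    rw [Finset.sum_congr rfl hcongr]
    have hkey : ∀ k, 1 ≤ k → k < a →
        ((2*b - k*b/a) - (k*b/a + 1)) + ((2*b - (a-k)*b/a) - ((a-k)*b/a + 1)) = 2*b := by
      intro k hx1 hx2
      have hq := q_add a b k (by omega) hb hcop hx1 hx2
      have hq1 : k*b/a ≤ b-1 := q_le (by omega) hx2 hb
      have hq2 : (a-k)*b/a ≤ b-1 := q_le (by omega) (by omega) hb
      exact f_add b _ _ hq hq1 hq2 hb
    set f : ℕ → ℕ := fun k => (2*b - k*b/a) - (k*b/a + 1) with hf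
    have hS1 : ∑ k ∈ Finset.Ico 1 a, f k = ∑ i ∈ Finset.range (a-1), f (1+i) :=
      Finset.sum_Ico_eq_sum_range f 1 a
    have hS2 : ∑ i ∈ Finset.range (a-1), f (1+i)
        = ∑ i ∈ Finset.range (a-1), f (a-(1+i)) := by
      rw [← Finset.sum_range_reflect]
      refine Finset.sum_congr rfl (fun j hj => ?_)
      simp only [Finset.mem_range] at hj
      congr 1
      omega
    have h2S : (∑ k ∈ Finset.Ico 1 a, f k) * 2 = (a-1)*(2*b) := by
      calc (∑ k ∈ Finset.Ico 1 a, f k) * 2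
          = ∑ i ∈ Finset.range (a-1), (f (1+i) + f (a-(1+i))) := by
            rw [Finset.sum_add_distrib, ← hS2, ← hS1]; ring
        _ = ∑ _i ∈ Finset.range (a-1), 2*b := by
            refine Finset.sum_congr rfl (fun i hi => ?_)
            simp only [Finset.mem_range] at hi
            exact hkey (1+i) (by omega) (by omega)
        _ = (a-1)*(2*b) := by rw [Finset.sum_const, Finset.card_range, smul_eq_mul]
    have : (∑ k ∈ Finset.Ico 1 a, f k) * 2 = ((a-1)*b) * 2 := by rw [h2S]; ring
    exact Nat.eq_of_mul_eq_mul_right (by omega) this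
  · intro x hx y hy hxy
    simp only [Finset.disjoint_left, Finset.mem_image]
    rintro ⟨k, m⟩ ⟨m₁, hm₁, h⟩ ⟨m₂, hm₂, h'⟩
    have h1 : x = k := (Prod.ext_iff.1 h).1
    have h2 : y = k := (Prod.ext_iff.1 h').1
    exact hxy (h1.trans h2.symm)



noncomputable def pt1 (n₁ n₂ : ℕ) (φ : ℝ) (p : ℕ × ℕ) : ℝ × ℝ :=
  (((p.1:ℝ)/n₁ + ((p.2:ℝ)/n₂ - 2*φ))/2, (((p.2:ℝ)/n₂ - 2*φ) - (p.1:ℝ)/n₁)/2)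

noncomputable def pt2 (n₁ n₂ : ℕ) (p : ℕ × ℕ) : ℝ × ℝ :=
  (((p.2:ℝ)/n₁ + (p.1:ℝ)/n₂)/2, ((p.2:ℝ)/n₁ - (p.1:ℝ)/n₂)/2)

lemma coprime_int {n₁ n₂ : ℕ} (hcop : Nat.Coprime n₁ n₂) : IsCoprime (n₁:ℤ) (n₂:ℤ) := by
  rw [Int.isCoprime_iff_gcd_eq_one, Int.gcd_natCast_natCast]
  exact hcop

lemma case1 (n₁ n₂ : ℕ) (h₁ : 2 ≤ n₁) (h₂ : 2 ≤ n₂) (hcop : Nat.Coprime n₁ n₂)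
    (φ : ℝ) (hφ0 : 0 < φ) (hφ1 : 2*φ*n₁*n₂ < 1)
    (s t : ℝ) (hs0 : 0 ≤ s) (hs1 : s < 1) (ht0 : 0 ≤ t) (ht1 : t < 1)
    (k m : ℤ) (hkpos : 0 < k)
    (hd : (n₁:ℝ)*s - (n₁:ℝ)*t = k)
    (hm : (n₂:ℝ)*(s+φ) + (n₂:ℝ)*(t+φ) = m) :
    ∃ p ∈ Aset n₁ n₂, pt1 n₁ n₂ φ p = (s, t) := by
  have hN₁ : (0:ℝ) < n₁ := by exact_mod_cast (by omega : 0 < n₁)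
  have hN₂ : (0:ℝ) < n₂ := by exact_mod_cast (by omega : 0 < n₂)
  have e1 : (k:ℝ)*n₂ = n₁*n₂*s - n₁*n₂*t := by linear_combination (-(n₂:ℝ)) * hd
  have e2 : (m:ℝ)*n₁ = n₁*n₂*s + n₁*n₂*t + 2*φ*(n₁*n₂) := by
    linear_combination (-(n₁:ℝ)) * hm
  have hk2R : (k:ℝ) < n₁ := by
    nlinarith [mul_nonneg hN₁.le ht0, mul_lt_mul_of_pos_left hs1 hN₁]
  have hk2 : k < (n₁:ℤ) := by exact_mod_cast hk2R
  have hb1R : (k:ℝ)*n₂ < (m:ℝ)*n₁ := by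
    nlinarith [mul_nonneg (mul_nonneg hN₁.le hN₂.le) ht0, mul_pos (mul_pos hN₁ hN₂) hφ0]
  have hb1 : k*(n₂:ℤ) < m*(n₁:ℤ) := by exact_mod_cast hb1R
  have hb2R : (m:ℝ)*n₁ + (k:ℝ)*n₂ < 2*(n₁*n₂) + 1 := by
    nlinarith [mul_lt_mul_of_pos_left hs1 (mul_pos hN₁ hN₂)]
  have hb2' : m*(n₁:ℤ) + k*n₂ ≤ 2*(n₁*n₂) := by
    have : m*(n₁:ℤ) + k*n₂ < 2*((n₁:ℤ)*n₂) + 1 := by exact_mod_cast hb2R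
    exact Int.lt_add_one_iff.1 this
  have hne : m*(n₁:ℤ) + k*n₂ ≠ 2*(n₁*n₂) := by
    intro heq
    have hdvd : (n₁:ℤ) ∣ k*n₂ := ⟨2*n₂ - m, by linear_combination heq⟩
    have hk' : (n₁:ℤ) ∣ k := (coprime_int hcop).dvd_of_dvd_mul_right hdvd
    have := Int.le_of_dvd hkpos hk'
    omega
  have hb2 : m*(n₁:ℤ) + k*n₂ < 2*(n₁*n₂) := lt_of_le_of_ne hb2' hne
  have hn1 : (0:ℤ) < n₁ := by exact_mod_cast (by omega : 0 < n₁)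
  have hn2 : (0:ℤ) < n₂ := by exact_mod_cast (by omega : 0 < n₂)
  have hmpos : 0 < m := by nlinarith
  have hm2 : m < 2*(n₂:ℤ) := by
    have h' : m*(n₁:ℤ) < (2*n₂)*n₁ := by nlinarith
    exact lt_of_mul_lt_mul_right h' hn1.le
  set a := k.toNat with hadef
  set b := m.toNat with hbdef
  have hka : (a:ℤ) = k := Int.toNat_of_nonneg hkpos.le
  have hmb : (b:ℤ) = m := Int.toNat_of_nonneg hmpos.le
  refine ⟨(a, b), ?_, ?_⟩
  · simp only [Aset, Finset.mem_filter, Finset.mem_product, Finset.mem_Ico]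
    refine ⟨⟨⟨by omega, by omega⟩, by omega, by omega⟩, ?_, ?_⟩
    · have : ((a*n₂ : ℕ):ℤ) < ((b*n₁ : ℕ):ℤ) := by push_cast [hka, hmb]; linarith
      exact_mod_cast this
    · have : ((b*n₁ + a*n₂ : ℕ):ℤ) < ((2*n₁*n₂ : ℕ):ℤ) := by
        push_cast [hka, hmb]; linarith
      exact_mod_cast this
  · have haR : ((a:ℕ):ℝ) = (k:ℝ) := by exact_mod_cast congrArg (Int.cast : ℤ → ℝ) hka
    have hbR : ((b:ℕ):ℝ) = (m:ℝ) := by exact_mod_cast congrArg (Int.cast : ℤ → ℝ) hmb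
    have hne1 : (n₁:ℝ) ≠ 0 := ne_of_gt hN₁
    have hne2 : (n₂:ℝ) ≠ 0 := ne_of_gt hN₂
    refine Prod.ext ?_ ?_
    · show ((a:ℝ)/n₁ + ((b:ℝ)/n₂ - 2*φ))/2 = s
      rw [haR, hbR]
      field_simp
      linear_combination e1 + e2
    · show (((b:ℝ)/n₂ - 2*φ) - (a:ℝ)/n₁)/2 = t
      rw [haR, hbR]
      field_simp
      linear_combination e2 - e1

lemma case2 (n₁ n₂ : ℕ) (h₁ : 2 ≤ n₁) (h₂ : 2 ≤ n₂) (hcop : Nat.Coprime n₁ n₂)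
    (φ : ℝ)
    (s t : ℝ) (hs0 : 0 ≤ s) (hs1 : s < 1) (ht0 : 0 ≤ t) (ht1 : t < 1)
    (k m : ℤ) (hkpos : 0 < k)
    (hd : (n₂:ℝ)*(s+φ) - (n₂:ℝ)*(t+φ) = k)
    (hm : (n₁:ℝ)*s + (n₁:ℝ)*t = m) :
    ∃ p ∈ Aset n₂ n₁, pt2 n₁ n₂ p = (s, t) := by
  have hN₁ : (0:ℝ) < n₁ := by exact_mod_cast (by omega : 0 < n₁)
  have hN₂ : (0:ℝ) < n₂ := by exact_mod_cast (by omega : 0 < n₂)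
  have e1 : (k:ℝ)*n₁ = n₁*n₂*s - n₁*n₂*t := by linear_combination (-(n₁:ℝ)) * hd
  have e2 : (m:ℝ)*n₂ = n₁*n₂*s + n₁*n₂*t := by linear_combination (-(n₂:ℝ)) * hm
  have hk2R : (k:ℝ) < n₂ := by
    nlinarith [mul_nonneg (mul_nonneg hN₁.le hN₂.le) ht0,
      mul_lt_mul_of_pos_left hs1 (mul_pos hN₁ hN₂)]
  have hk2 : k < (n₂:ℤ) := by exact_mod_cast hk2R
  have hb1R : (k:ℝ)*n₁ ≤ (m:ℝ)*n₂ := by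
    nlinarith [mul_nonneg (mul_nonneg hN₁.le hN₂.le) ht0]
  have hb1' : k*(n₁:ℤ) ≤ m*(n₂:ℤ) := by exact_mod_cast hb1R
  have hne : k*(n₁:ℤ) ≠ m*(n₂:ℤ) := by
    intro heq
    have hdvd : (n₂:ℤ) ∣ k*n₁ := ⟨m, by linarith⟩
    have hk' : (n₂:ℤ) ∣ k := (coprime_int hcop.symm).dvd_of_dvd_mul_right hdvd
    have := Int.le_of_dvd hkpos hk'
    omega
  have hb1 : k*(n₁:ℤ) < m*(n₂:ℤ) := lt_of_le_of_ne hb1' hne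
  have hb2R : (m:ℝ)*n₂ + (k:ℝ)*n₁ < 2*(n₂*n₁) := by
    nlinarith [mul_lt_mul_of_pos_left hs1 (mul_pos hN₁ hN₂)]
  have hb2 : m*(n₂:ℤ) + k*n₁ < 2*((n₂:ℤ)*n₁) := by exact_mod_cast hb2R
  have hn1 : (0:ℤ) < n₁ := by exact_mod_cast (by omega : 0 < n₁)
  have hn2 : (0:ℤ) < n₂ := by exact_mod_cast (by omega : 0 < n₂)
  have hmpos : 0 < m := by nlinarith
  have hm2 : m < 2*(n₁:ℤ) := by
    have h' : m*(n₂:ℤ) < (2*n₁)*n₂ := by nlinarith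
    exact lt_of_mul_lt_mul_right h' hn2.le
  set a := k.toNat with hadef
  set b := m.toNat with hbdef
  have hka : (a:ℤ) = k := Int.toNat_of_nonneg hkpos.le
  have hmb : (b:ℤ) = m := Int.toNat_of_nonneg hmpos.le
  refine ⟨(a, b), ?_, ?_⟩
  · simp only [Aset, Finset.mem_filter, Finset.mem_product, Finset.mem_Ico]
    refine ⟨⟨⟨by omega, by omega⟩, by omega, by omega⟩, ?_, ?_⟩
    · have : ((a*n₁ : ℕ):ℤ) < ((b*n₂ : ℕ):ℤ) := by push_cast [hka, hmb]; linarith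
      exact_mod_cast this
    · have : ((b*n₂ + a*n₁ : ℕ):ℤ) < ((2*n₂*n₁ : ℕ):ℤ) := by
        push_cast [hka, hmb]; linarith
      exact_mod_cast this
  · have haR : ((a:ℕ):ℝ) = (k:ℝ) := by exact_mod_cast congrArg (Int.cast : ℤ → ℝ) hka
    have hbR : ((b:ℕ):ℝ) = (m:ℝ) := by exact_mod_cast congrArg (Int.cast : ℤ → ℝ) hmb
    have hne1 : (n₁:ℝ) ≠ 0 := ne_of_gt hN₁
    have hne2 : (n₂:ℝ) ≠ 0 := ne_of_gt hN₂
    refine Prod.ext ?_ ?_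
    · show ((b:ℝ)/n₁ + (a:ℝ)/n₂)/2 = s
      rw [haR, hbR]
      field_simp
      linear_combination e1 + e2
    · show ((b:ℝ)/n₁ - (a:ℝ)/n₂)/2 = t
      rw [haR, hbR]
      field_simp
      linear_combination e2 - e1

lemma cosEq' (c s t : ℝ) : Real.cos (2*π*c*s) = Real.cos (2*π*c*t) ↔
    ((∃ k : ℤ, c*s - c*t = k) ∨ (∃ k : ℤ, c*s + c*t = k)) := by
  rw [mul_assoc (2*π) c s, mul_assoc (2*π) c t]
  exact cosEq _ _

lemma g1_props (n₁ n₂ : ℕ) (h₁ : 2 ≤ n₁) (h₂ : 2 ≤ n₂)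
    (φ : ℝ) (hφ0 : 0 < φ) (hφ1 : 2*φ*n₁*n₂ < 1)
    (p : ℕ × ℕ) (hp : p ∈ Aset n₁ n₂) :
    0 ≤ (pt1 n₁ n₂ φ p).2 ∧ (pt1 n₁ n₂ φ p).2 < (pt1 n₁ n₂ φ p).1 ∧ (pt1 n₁ n₂ φ p).1 < 1 ∧
    Real.cos (2*π*n₁*(pt1 n₁ n₂ φ p).1) = Real.cos (2*π*n₁*(pt1 n₁ n₂ φ p).2) ∧
    Real.cos (2*π*n₂*((pt1 n₁ n₂ φ p).1+φ)) = Real.cos (2*π*n₂*((pt1 n₁ n₂ φ p).2+φ)) := by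
  obtain ⟨k, m⟩ := p
  simp only [Aset, Finset.mem_filter, Finset.mem_product, Finset.mem_Ico] at hp
  obtain ⟨⟨⟨hk1, hk2⟩, hm1, hm2⟩, hc1, hc2⟩ := hp
  have hN₁ : (0:ℝ) < n₁ := by exact_mod_cast (by omega : 0 < n₁)
  have hN₂ : (0:ℝ) < n₂ := by exact_mod_cast (by omega : 0 < n₂)
  have hne1 : (n₁:ℝ) ≠ 0 := ne_of_gt hN₁
  have hne2 : (n₂:ℝ) ≠ 0 := ne_of_gt hN₂
  have hpos : (0:ℝ) < 2*(n₁*n₂) := by positivity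
  have hc1R : (k:ℝ)*n₂ + 1 ≤ (m:ℝ)*n₁ := by exact_mod_cast Nat.succ_le_of_lt hc1
  have hc2R : (m:ℝ)*n₁ + (k:ℝ)*n₂ + 1 ≤ 2*(n₁*n₂) := by
    have : (m*n₁ + k*n₂ + 1 : ℕ) ≤ 2*(n₁*n₂) :=
      Nat.succ_le_of_lt (by rw [← mul_assoc]; exact hc2)
    exact_mod_cast this
  have hk1R : (1:ℝ) ≤ (k:ℝ) := by exact_mod_cast hk1
  set s := (pt1 n₁ n₂ φ (k, m)).1 with hsdef
  set t := (pt1 n₁ n₂ φ (k, m)).2 with htdef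
  have hsval : s = ((k:ℝ)/n₁ + ((m:ℝ)/n₂ - 2*φ))/2 := rfl
  have htval : t = (((m:ℝ)/n₂ - 2*φ) - (k:ℝ)/n₁)/2 := rfl
  have htq : t = ((m:ℝ)*n₁ - (k:ℝ)*n₂ - 2*φ*(n₁*n₂))/(2*(n₁*n₂)) := by
    rw [htval]; field_simp; ring
  have hsq : s = ((k:ℝ)*n₂ + (m:ℝ)*n₁ - 2*φ*(n₁*n₂))/(2*(n₁*n₂)) := by
    rw [hsval]; field_simp; ring
  have ht0 : 0 ≤ t := by
    rw [htq]
    apply div_nonneg _ hpos.le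
    nlinarith
  have hs1 : s < 1 := by
    rw [hsq]
    rw [div_lt_one hpos]
    nlinarith [mul_pos (mul_pos hN₁ hN₂) hφ0]
  have hts : t < s := by
    have : s - t = (k:ℝ)/n₁ := by rw [hsval, htval]; ring
    have hpos' : (0:ℝ) < (k:ℝ)/n₁ := div_pos (by linarith) hN₁
    linarith
  refine ⟨ht0, hts, hs1, ?_, ?_⟩
  · refine (cosEq' (n₁:ℝ) s t).2 (Or.inl ⟨(k:ℤ), ?_⟩)
    push_cast
    rw [hsval, htval]
    field_simp
    ring
  · refine (cosEq' (n₂:ℝ) (s+φ) (t+φ)).2 (Or.inr ⟨(m:ℤ), ?_⟩)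
    push_cast
    rw [hsval, htval]
    field_simp
    ring

lemma g2_props (n₁ n₂ : ℕ) (h₁ : 2 ≤ n₁) (h₂ : 2 ≤ n₂)
    (φ : ℝ)
    (p : ℕ × ℕ) (hp : p ∈ Aset n₂ n₁) :
    0 ≤ (pt2 n₁ n₂ p).2 ∧ (pt2 n₁ n₂ p).2 < (pt2 n₁ n₂ p).1 ∧ (pt2 n₁ n₂ p).1 < 1 ∧
    Real.cos (2*π*n₁*(pt2 n₁ n₂ p).1) = Real.cos (2*π*n₁*(pt2 n₁ n₂ p).2) ∧
    Real.cos (2*π*n₂*((pt2 n₁ n₂ p).1+φ)) = Real.cos (2*π*n₂*((pt2 n₁ n₂ p).2+φ)) := by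
  obtain ⟨k, m⟩ := p
  simp only [Aset, Finset.mem_filter, Finset.mem_product, Finset.mem_Ico] at hp
  obtain ⟨⟨⟨hk1, hk2⟩, hm1, hm2⟩, hc1, hc2⟩ := hp
  have hN₁ : (0:ℝ) < n₁ := by exact_mod_cast (by omega : 0 < n₁)
  have hN₂ : (0:ℝ) < n₂ := by exact_mod_cast (by omega : 0 < n₂)
  have hne1 : (n₁:ℝ) ≠ 0 := ne_of_gt hN₁
  have hne2 : (n₂:ℝ) ≠ 0 := ne_of_gt hN₂
  have hpos : (0:ℝ) < 2*(n₁*n₂) := by positivity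
  have hc1R : (k:ℝ)*n₁ + 1 ≤ (m:ℝ)*n₂ := by exact_mod_cast Nat.succ_le_of_lt hc1
  have hc2R : (m:ℝ)*n₂ + (k:ℝ)*n₁ < 2*(n₁*n₂) := by
    have : (m*n₂ + k*n₁ : ℕ) < 2*(n₁*n₂) := by
      have h' : 2*n₂*n₁ = 2*(n₁*n₂) := by ring
      omega
    exact_mod_cast this
  have hk1R : (1:ℝ) ≤ (k:ℝ) := by exact_mod_cast hk1
  set s := (pt2 n₁ n₂ (k, m)).1 with hsdef
  set t := (pt2 n₁ n₂ (k, m)).2 with htdef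
  have hsval : s = ((m:ℝ)/n₁ + (k:ℝ)/n₂)/2 := rfl
  have htval : t = ((m:ℝ)/n₁ - (k:ℝ)/n₂)/2 := rfl
  have htq : t = ((m:ℝ)*n₂ - (k:ℝ)*n₁)/(2*(n₁*n₂)) := by
    rw [htval]; field_simp
  have hsq : s = ((m:ℝ)*n₂ + (k:ℝ)*n₁)/(2*(n₁*n₂)) := by
    rw [hsval, div_eq_div_iff (two_ne_zero) (ne_of_gt hpos)]
    field_simp
  have ht0 : 0 ≤ t := by
    rw [htq]
    apply div_nonneg _ hpos.le
    linarith
  have hs1 : s < 1 := by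
    rw [hsq, div_lt_one hpos]
    linarith
  have hts : t < s := by
    have hd : s - t = (k:ℝ)/n₂ := by rw [hsval, htval]; ring
    have hpos' : (0:ℝ) < (k:ℝ)/n₂ := div_pos (by linarith) hN₂
    linarith
  refine ⟨ht0, hts, hs1, ?_, ?_⟩
  · refine (cosEq' (n₁:ℝ) s t).2 (Or.inr ⟨(m:ℤ), ?_⟩)
    push_cast
    rw [hsval, htval]
    field_simp
    ring
  · refine (cosEq' (n₂:ℝ) (s+φ) (t+φ)).2 (Or.inl ⟨(k:ℤ), ?_⟩)
    push_cast
    rw [hsval, htval]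
    field_simp
    ring

lemma pt1_snd_lt_fst (n₁ n₂ : ℕ) (h₁ : 2 ≤ n₁) (h₂ : 2 ≤ n₂) (φ : ℝ)
    (p : ℕ × ℕ) (hp : p ∈ Aset n₁ n₂) : (pt1 n₁ n₂ φ p).2 < (pt1 n₁ n₂ φ p).1 := by
  simp only [Aset, Finset.mem_filter, Finset.mem_product, Finset.mem_Ico] at hp
  have hN₁ : (0:ℝ) < n₁ := by exact_mod_cast (by omega : 0 < n₁)
  have hk1 : (1:ℝ) ≤ (p.1:ℝ) := by exact_mod_cast hp.1.1.1
  have : (pt1 n₁ n₂ φ p).1 - (pt1 n₁ n₂ φ p).2 = (p.1:ℝ)/n₁ := by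
    simp only [pt1]; ring
  nlinarith [div_pos (show (0:ℝ) < (p.1:ℝ) by linarith) hN₁]

lemma pt2_snd_lt_fst (n₁ n₂ : ℕ) (h₁ : 2 ≤ n₁) (h₂ : 2 ≤ n₂)
    (p : ℕ × ℕ) (hp : p ∈ Aset n₂ n₁) : (pt2 n₁ n₂ p).2 < (pt2 n₁ n₂ p).1 := by
  simp only [Aset, Finset.mem_filter, Finset.mem_product, Finset.mem_Ico] at hp
  have hN₂ : (0:ℝ) < n₂ := by exact_mod_cast (by omega : 0 < n₂)
  have hk1 : (1:ℝ) ≤ (p.1:ℝ) := by exact_mod_cast hp.1.1.1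
  have : (pt2 n₁ n₂ p).1 - (pt2 n₁ n₂ p).2 = (p.1:ℝ)/n₂ := by
    simp only [pt2]; ring
  nlinarith [div_pos (show (0:ℝ) < (p.1:ℝ) by linarith) hN₂]

lemma inj1 (n₁ n₂ : ℕ) (h₁ : 2 ≤ n₁) (h₂ : 2 ≤ n₂) (φ : ℝ) :
    Set.InjOn (fun p => Sym2.mk (pt1 n₁ n₂ φ p).1 (pt1 n₁ n₂ φ p).2) ↑(Aset n₁ n₂) := by
  intro p hp q hq h
  have hN₁ : (0:ℝ) < n₁ := by exact_mod_cast (by omega : 0 < n₁)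
  have hN₂ : (0:ℝ) < n₂ := by exact_mod_cast (by omega : 0 < n₂)
  have hop : (pt1 n₁ n₂ φ p).2 < (pt1 n₁ n₂ φ p).1 :=
    pt1_snd_lt_fst n₁ n₂ h₁ h₂ φ p (Finset.mem_coe.1 hp)
  have hoq : (pt1 n₁ n₂ φ q).2 < (pt1 n₁ n₂ φ q).1 :=
    pt1_snd_lt_fst n₁ n₂ h₁ h₂ φ q (Finset.mem_coe.1 hq)
  simp only [Sym2.mk_eq_mk_iff] at h
  have heq : pt1 n₁ n₂ φ p = pt1 n₁ n₂ φ q := by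
    rcases h with h | h
    · exact h
    · exfalso
      have h1 := (Prod.ext_iff.1 h).1
      have h2 := (Prod.ext_iff.1 h).2
      rw [Prod.fst_swap] at h1
      rw [Prod.snd_swap] at h2
      linarith
  have h1 := (Prod.ext_iff.1 heq).1
  have h2 := (Prod.ext_iff.1 heq).2
  simp only [pt1] at h1 h2
  have hd : (p.1:ℝ)/n₁ = (q.1:ℝ)/n₁ := by linarith
  have hs : (p.2:ℝ)/n₂ = (q.2:ℝ)/n₂ := by linarith
  field_simp at hd hs
  exact Prod.ext (by exact_mod_cast hd) (by exact_mod_cast hs)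

lemma inj2 (n₁ n₂ : ℕ) (h₁ : 2 ≤ n₁) (h₂ : 2 ≤ n₂) :
    Set.InjOn (fun p => Sym2.mk (pt2 n₁ n₂ p).1 (pt2 n₁ n₂ p).2) ↑(Aset n₂ n₁) := by
  intro p hp q hq h
  have hN₁ : (0:ℝ) < n₁ := by exact_mod_cast (by omega : 0 < n₁)
  have hN₂ : (0:ℝ) < n₂ := by exact_mod_cast (by omega : 0 < n₂)
  have hop : (pt2 n₁ n₂ p).2 < (pt2 n₁ n₂ p).1 :=
    pt2_snd_lt_fst n₁ n₂ h₁ h₂ p (Finset.mem_coe.1 hp)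
  have hoq : (pt2 n₁ n₂ q).2 < (pt2 n₁ n₂ q).1 :=
    pt2_snd_lt_fst n₁ n₂ h₁ h₂ q (Finset.mem_coe.1 hq)
  simp only [Sym2.mk_eq_mk_iff] at h
  have heq : pt2 n₁ n₂ p = pt2 n₁ n₂ q := by
    rcases h with h | h
    · exact h
    · exfalso
      have h1 := (Prod.ext_iff.1 h).1
      have h2 := (Prod.ext_iff.1 h).2
      rw [Prod.fst_swap] at h1
      rw [Prod.snd_swap] at h2
      linarith
  have h1 := (Prod.ext_iff.1 heq).1
  have h2 := (Prod.ext_iff.1 heq).2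
  simp only [pt2] at h1 h2
  have hd : (p.1:ℝ)/n₂ = (q.1:ℝ)/n₂ := by linarith
  have hs : (p.2:ℝ)/n₁ = (q.2:ℝ)/n₁ := by linarith
  field_simp at hd hs
  exact Prod.ext (by exact_mod_cast hd) (by exact_mod_cast hs)

lemma rational_of_int_mul (φ : ℝ) (c d : ℤ) (hc : (c:ℝ) ≠ 0) (h : (c:ℝ)*φ = d) :
    ¬ Irrational φ := by
  intro hirr
  have hφ : φ = (d:ℝ)/c := by rw [eq_div_iff hc]; linarith
  exact hirr ⟨(d:ℚ)/(c:ℚ), by push_cast; rw [hφ]⟩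

lemma disj12 (n₁ n₂ : ℕ) (h₁ : 2 ≤ n₁) (h₂ : 2 ≤ n₂) (φ : ℝ) (hirr : Irrational φ) :
    Disjoint ((fun p => Sym2.mk (pt1 n₁ n₂ φ p).1 (pt1 n₁ n₂ φ p).2) '' ↑(Aset n₁ n₂))
      ((fun p => Sym2.mk (pt2 n₁ n₂ p).1 (pt2 n₁ n₂ p).2) '' ↑(Aset n₂ n₁)) := by
  rw [Set.disjoint_left]
  rintro z ⟨p, hp, rfl⟩ ⟨q, hq, hz⟩
  have hN₁ : (0:ℝ) < n₁ := by exact_mod_cast (by omega : 0 < n₁)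
  have hN₂ : (0:ℝ) < n₂ := by exact_mod_cast (by omega : 0 < n₂)
  have hne1 : (n₁:ℝ) ≠ 0 := ne_of_gt hN₁
  have hne2 : (n₂:ℝ) ≠ 0 := ne_of_gt hN₂
  simp only [Sym2.mk_eq_mk_iff] at hz
  have hsum : (pt2 n₁ n₂ q).1 + (pt2 n₁ n₂ q).2 = (pt1 n₁ n₂ φ p).1 + (pt1 n₁ n₂ φ p).2 := by
    rcases hz with h | h
    · rw [(Prod.ext_iff.1 h).1, (Prod.ext_iff.1 h).2]
    · have h1 := (Prod.ext_iff.1 h).1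
      have h2 := (Prod.ext_iff.1 h).2
      rw [Prod.fst_swap] at h1
      rw [Prod.snd_swap] at h2
      rw [h1, h2]
      ring
  have e1 : (pt2 n₁ n₂ q).1 + (pt2 n₁ n₂ q).2 = (q.2:ℝ)/n₁ := by
    simp only [pt2]; ring
  have e2 : (pt1 n₁ n₂ φ p).1 + (pt1 n₁ n₂ φ p).2 = (p.2:ℝ)/n₂ - 2*φ := by
    simp only [pt1]; ring
  rw [e1, e2] at hsum
  field_simp at hsum
  have key : ((2*n₁*n₂ : ℤ):ℝ) * φ = ((p.2 * n₁ : ℤ) - (q.2 * n₂ : ℤ) : ℤ) := by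
    push_cast
    linarith
  exact absurd hirr (rational_of_int_mul φ _ _ (by push_cast; positivity) key)

open Real in
/-- For coprime integers `n₁, n₂ ≥ 2` there is `φ₀ > 0` such that for every
irrational `0 < φ < φ₀`, the planar Lissajous curve `L(t) = (cos(2πn₁t), cos(2πn₂(t+φ)))`
on `[0,1)` has exactly `2n₁n₂ − n₁ − n₂` double points (unordered pairs `{s,t}`, `s ≠ t`,
with `L s = L t`). -/
theorem lissajous_stmt4 (n₁ n₂ : ℕ) (h₁ : 2 ≤ n₁) (h₂ : 2 ≤ n₂) (hcop : Nat.Coprime n₁ n₂) :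
    ∃ φ₀ > (0:ℝ), ∀ φ : ℝ, Irrational φ → 0 < φ → φ < φ₀ →
      let L : ℝ → ℝ × ℝ := fun t =>
        (Real.cos (2 * π * n₁ * t), Real.cos (2 * π * n₂ * (t + φ)))
      let S : Set (Sym2 ℝ) := {z | ∃ s t : ℝ, z = Sym2.mk s t ∧
        s ∈ Set.Ico (0:ℝ) 1 ∧ t ∈ Set.Ico (0:ℝ) 1 ∧ s ≠ t ∧ L s = L t}
      S.Finite ∧ S.ncard = 2 * n₁ * n₂ - n₁ - n₂ := by
  have hN₁ : (0:ℝ) < n₁ := by exact_mod_cast (by omega : 0 < n₁)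
  have hN₂ : (0:ℝ) < n₂ := by exact_mod_cast (by omega : 0 < n₂)
  refine ⟨1/(2*n₁*n₂), by positivity, ?_⟩
  intro φ hirr hφ0 hφub L S
  have hφ1 : 2*φ*n₁*n₂ < 1 := by
    rw [lt_div_iff₀ (by positivity)] at hφub
    nlinarith
  have hn1z : (0:ℤ) < n₁ := by exact_mod_cast (by omega : 0 < n₁)
  have hn2z : (0:ℤ) < n₂ := by exact_mod_cast (by omega : 0 < n₂)
  -- set equality
  have hSeq : S = ((fun p => Sym2.mk (pt1 n₁ n₂ φ p).1 (pt1 n₁ n₂ φ p).2) '' ↑(Aset n₁ n₂)) ∪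
      ((fun p => Sym2.mk (pt2 n₁ n₂ p).1 (pt2 n₁ n₂ p).2) '' ↑(Aset n₂ n₁)) := by
    ext z
    simp only [S, L, Set.mem_setOf_eq, Set.mem_union, Set.mem_image, Finset.mem_coe]
    constructor
    · rintro ⟨s, t, rfl, ⟨hs0, hs1⟩, ⟨ht0, ht1⟩, hne, hL⟩
      rw [Prod.mk.injEq] at hL
      rcases (cosEq' (n₁:ℝ) s t).1 hL.1 with ⟨k, hk⟩ | ⟨k, hk⟩ <;>
        rcases (cosEq' (n₂:ℝ) (s+φ) (t+φ)).1 hL.2 with ⟨l, hl⟩ | ⟨l, hl⟩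
      · -- diff, diff : impossible
        exfalso
        have hkl : (k:ℝ)*n₂ = (l:ℝ)*n₁ := by linear_combination (-(n₂:ℝ))*hk + (n₁:ℝ)*hl
        have hklz : k*(n₂:ℤ) = l*n₁ := by exact_mod_cast hkl
        have hk0 : k ≠ 0 := by
          intro h0
          rw [h0] at hk
          push_cast at hk
          exact hne (by nlinarith)
        have hdvd : (n₁:ℤ) ∣ k := (coprime_int hcop).dvd_of_dvd_mul_right ⟨l, by linarith⟩
        have hub : (k:ℝ) < n₁ := by nlinarith
        have hlb : -(n₁:ℝ) < k := by nlinarith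
        have habs : |k| < (n₁:ℤ) := abs_lt.2 ⟨by exact_mod_cast hlb, by exact_mod_cast hub⟩
        have := Int.le_of_dvd (abs_pos.2 hk0) ((dvd_abs _ _).2 hdvd)
        omega
      · -- diff, sum : family 1
        have hk0 : k ≠ 0 := by
          intro h0
          rw [h0] at hk
          push_cast at hk
          exact hne (by nlinarith)
        rcases hk0.lt_or_gt with hkneg | hkpos
        · obtain ⟨p, hp, hpt⟩ := case1 n₁ n₂ h₁ h₂ hcop φ hφ0 hφ1 t s ht0 ht1 hs0 hs1
            (-k) l (by omega) (by push_cast; linarith) (by linarith)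
          exact Or.inl ⟨p, hp, by rw [hpt]; exact (Sym2.eq_swap).symm⟩
        · obtain ⟨p, hp, hpt⟩ := case1 n₁ n₂ h₁ h₂ hcop φ hφ0 hφ1 s t hs0 hs1 ht0 ht1
            k l hkpos hk hl
          exact Or.inl ⟨p, hp, by rw [hpt]⟩
      · -- sum, diff : family 2
        have hl0 : l ≠ 0 := by
          intro h0
          rw [h0] at hl
          push_cast at hl
          exact hne (by nlinarith)
        rcases hl0.lt_or_gt with hlneg | hlpos
        · obtain ⟨p, hp, hpt⟩ := case2 n₁ n₂ h₁ h₂ hcop φ t s ht0 ht1 hs0 hs1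
            (-l) k (by omega) (by push_cast; linarith) (by linarith)
          exact Or.inr ⟨p, hp, by rw [hpt]; exact (Sym2.eq_swap).symm⟩
        · obtain ⟨p, hp, hpt⟩ := case2 n₁ n₂ h₁ h₂ hcop φ s t hs0 hs1 ht0 ht1
            l k hlpos hl hk
          exact Or.inr ⟨p, hp, by rw [hpt]⟩
      · -- sum, sum : contradicts irrationality
        exfalso
        have key : ((2*n₁*n₂ : ℤ):ℝ) * φ = (((n₁:ℤ)*l - (n₂:ℤ)*k : ℤ):ℝ) := by
          push_cast
          linear_combination (n₁:ℝ)*hl - (n₂:ℝ)*hk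
        exact absurd hirr (rational_of_int_mul φ _ _ (by push_cast; positivity) key)
    · rintro (⟨p, hp, rfl⟩ | ⟨p, hp, rfl⟩)
      · obtain ⟨ht0, hts, hs1, hc1, hc2⟩ := g1_props n₁ n₂ h₁ h₂ φ hφ0 hφ1 p hp
        refine ⟨(pt1 n₁ n₂ φ p).1, (pt1 n₁ n₂ φ p).2, rfl,
          ⟨le_trans ht0 hts.le, hs1⟩, ⟨ht0, lt_trans hts hs1⟩, hts.ne', ?_⟩
        rw [Prod.mk.injEq]
        exact ⟨hc1, hc2⟩
      · obtain ⟨ht0, hts, hs1, hc1, hc2⟩ := g2_props n₁ n₂ h₁ h₂ φ p hp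
        refine ⟨(pt2 n₁ n₂ p).1, (pt2 n₁ n₂ p).2, rfl,
          ⟨le_trans ht0 hts.le, hs1⟩, ⟨ht0, lt_trans hts hs1⟩, hts.ne', ?_⟩
        rw [Prod.mk.injEq]
        exact ⟨hc1, hc2⟩
  have hfin1 : ((fun p => Sym2.mk (pt1 n₁ n₂ φ p).1 (pt1 n₁ n₂ φ p).2) '' ↑(Aset n₁ n₂)).Finite :=
    ((Aset n₁ n₂).finite_toSet).image _
  have hfin2 : ((fun p => Sym2.mk (pt2 n₁ n₂ p).1 (pt2 n₁ n₂ p).2) '' ↑(Aset n₂ n₁)).Finite :=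
    ((Aset n₂ n₁).finite_toSet).image _
  constructor
  · rw [hSeq]; exact hfin1.union hfin2
  · rw [hSeq, Set.ncard_union_eq (disj12 n₁ n₂ h₁ h₂ φ hirr) hfin1 hfin2,
      Set.ncard_image_of_injOn (inj1 n₁ n₂ h₁ h₂ φ),
      Set.ncard_image_of_injOn (inj2 n₁ n₂ h₁ h₂),
      Set.ncard_coe_finset, Set.ncard_coe_finset,
      card_Aset n₁ n₂ h₁ (by omega) hcop,
      card_Aset n₂ n₁ h₂ (by omega) hcop.symm]
    have e1 : (n₁-1)*n₂ = n₁*n₂ - n₂ := by rw [Nat.sub_mul, one_mul]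
    have e2 : (n₂-1)*n₁ = n₂*n₁ - n₁ := by rw [Nat.sub_mul, one_mul]
    have hc : n₂*n₁ = n₁*n₂ := Nat.mul_comm _ _
    have h3 : 2*n₁*n₂ = n₁*n₂ + n₁*n₂ := by ring
    have key : ∀ X : ℕ, n₂ ≤ X → n₁ ≤ X →
        (X - n₂) + (X - n₁) = (X + X) - n₁ - n₂ := fun X a b => by omega
    rw [e1, e2, hc, h3]
    exact key (n₁*n₂) (Nat.le_mul_of_pos_left n₂ (by omega))
      (Nat.le_mul_of_pos_right n₁ (by omega))
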